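/- Let Q(u,v) = k·u^{δ(1−βρ)}·((ρ−1)u+v)^{βδρ} be a 2-input VES production function on the domain D = {(u,v) ∈ ℝ² : u>0, v>0, (ρ−1)u+v>0}, with parameters satisfying k>0, 0<β<1, 0<βρ<1, δ>0. Then at every point (u,v) ∈ D, the Hessian determinant Q_uu(u,v)·Q_vv(u,v) − Q_uv(u,v)² has the same sign as 1 − δ: it is zero if δ = 1, strictly positive if δ < 1, and strictly negative if δ > 1. -/

import Mathlib

open Real

/-- Partial derivative in the first variable. -/
noncomputable def pdu (f : ℝ → ℝ → ℝ) : ℝ → ℝ → ℝ := fun u v => deriv (fun x => f x v) u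

/-- Partial derivative in the second variable. -/
noncomputable def pdv (f : ℝ → ℝ → ℝ) : ℝ → ℝ → ℝ := fun u v => deriv (fun y => f u y) v

/-- Hessian determinant `f_uu · f_vv − f_uv²` of `f` at `(u, v)`. -/
noncomputable def hessDet (f : ℝ → ℝ → ℝ) (u v : ℝ) : ℝ :=
  pdu (pdu f) u v * pdv (pdv f) u v - pdv (pdu f) u v ^ 2

/-- Gaussian curvature of the graph surface `{(u, v, f u v)}` at `(u, v)`:
`K = (f_uu · f_vv − f_uv²) / (1 + f_u² + f_v²)²`. -/
noncomputable def gaussK (f : ℝ → ℝ → ℝ) (u v : ℝ) : ℝ :=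
  hessDet f u v / (1 + pdu f u v ^ 2 + pdv f u v ^ 2) ^ 2

/-- The 2-input VES production function
`Q(u,v) = k · u^(δ(1−βρ)) · ((ρ−1)u + v)^(βδρ)`. -/
noncomputable def QVES (k β ρ δ : ℝ) : ℝ → ℝ → ℝ := fun u v =>
  k * u ^ (δ * (1 - β * ρ)) * ((ρ - 1) * u + v) ^ (β * δ * ρ)

/-- Derivative in the first variable of `c·u^a·((ρ−1)u+v)^b`. -/
lemma hdU (ρ c a b v u : ℝ) (hu : 0 < u) (hw : 0 < (ρ - 1) * u + v) :
    HasDerivAt (fun x : ℝ => c * x ^ a * ((ρ - 1) * x + v) ^ b)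
      (c * a * u ^ (a - 1) * ((ρ - 1) * u + v) ^ b
        + c * b * (ρ - 1) * u ^ a * ((ρ - 1) * u + v) ^ (b - 1)) u := by
  have h1 : HasDerivAt (fun x : ℝ => c * x ^ a) (c * (a * u ^ (a - 1))) u :=
    (Real.hasDerivAt_rpow_const (Or.inl hu.ne')).const_mul c
  have h2 : HasDerivAt (fun x : ℝ => (ρ - 1) * x + v) (ρ - 1) u := by
    simpa using ((hasDerivAt_id u).const_mul (ρ - 1)).add_const v
  have h3 : HasDerivAt (fun x : ℝ => ((ρ - 1) * x + v) ^ b)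
      (b * ((ρ - 1) * u + v) ^ (b - 1) * (ρ - 1)) u :=
    by
      have h5 := HasDerivAt.comp u (h₂ := fun x : ℝ => x ^ b) (Real.hasDerivAt_rpow_const (Or.inl hw.ne')) h2
      exact h5
  have h4 := h1.mul h3
  refine h4.congr_deriv ?_
  ring

/-- Derivative in the second variable of `c·u^a·((ρ−1)u+v)^b`. -/
lemma hdV (ρ c a b u v : ℝ) (hw : 0 < (ρ - 1) * u + v) :
    HasDerivAt (fun y : ℝ => c * u ^ a * ((ρ - 1) * u + y) ^ b)
      (c * b * u ^ a * ((ρ - 1) * u + v) ^ (b - 1)) v := by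
  have h2 : HasDerivAt (fun y : ℝ => (ρ - 1) * u + y) 1 v :=
    (hasDerivAt_id v).const_add ((ρ - 1) * u)
  have h3 : HasDerivAt (fun y : ℝ => ((ρ - 1) * u + y) ^ b)
      (b * ((ρ - 1) * u + v) ^ (b - 1) * 1) v :=
    (Real.hasDerivAt_rpow_const (Or.inl hw.ne')).comp v h2
  have h4 := h3.const_mul (c * u ^ a)
  refine h4.congr_deriv ?_
  ring

/-- At every point of the domain `D = {(u,v) : u > 0, v > 0, (ρ−1)u + v > 0}`, the Hessian
determinant `Q_uu·Q_vv − Q_uv²` of the VES production function has the same sign as `1 − δ`: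
it is zero if `δ = 1`, strictly positive if `δ < 1`, and strictly negative if `δ > 1`. -/
theorem ves_hessDet_sign
    (k β ρ δ : ℝ) (hk : 0 < k) (hβ0 : 0 < β) (hβ1 : β < 1)
    (hβρ0 : 0 < β * ρ) (hβρ1 : β * ρ < 1) (hδ : 0 < δ) :
    ∀ u v : ℝ, 0 < u → 0 < v → 0 < (ρ - 1) * u + v →
      (δ = 1 → hessDet (QVES k β ρ δ) u v = 0) ∧
      (δ < 1 → 0 < hessDet (QVES k β ρ δ) u v) ∧
      (1 < δ → hessDet (QVES k β ρ δ) u v < 0) := by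
  intro u v hu hv hw
  set a : ℝ := δ * (1 - β * ρ) with ha
  set b : ℝ := β * δ * ρ with hb
  set Q := QVES k β ρ δ with hQ
  set w : ℝ := (ρ - 1) * u + v with hwdef
  have hab : a + b = δ := by rw [ha, hb]; ring
  have ha0 : 0 < a := by
    have : 0 < 1 - β * ρ := by linarith
    exact mul_pos hδ this
  have hb0 : 0 < b := by
    have : b = (β * ρ) * δ := by rw [hb]; ring
    rw [this]; exact mul_pos hβρ0 hδ
  -- first partials, valid throughout the domain
  have hQu : ∀ x y : ℝ, 0 < x → 0 < (ρ - 1) * x + y →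
      pdu Q x y = k * a * x ^ (a - 1) * ((ρ - 1) * x + y) ^ b
        + k * b * (ρ - 1) * x ^ a * ((ρ - 1) * x + y) ^ (b - 1) := by
    intro x y hx hxy
    exact (hdU ρ k a b y x hx hxy).deriv
  have hQv : ∀ x y : ℝ, 0 < (ρ - 1) * x + y →
      pdv Q x y = k * b * x ^ a * ((ρ - 1) * x + y) ^ (b - 1) := by
    intro x y hxy
    exact (hdV ρ k a b x y hxy).deriv
  -- Q_uu
  have huu : pdu (pdu Q) u v =
      k * a * (a - 1) * u ^ (a - 2) * w ^ b
        + k * a * b * (ρ - 1) * u ^ (a - 1) * w ^ (b - 1)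
        + (k * b * (ρ - 1) * a * u ^ (a - 1) * w ^ (b - 1)
            + k * b * (ρ - 1) * (b - 1) * (ρ - 1) * u ^ a * w ^ (b - 2)) := by
    have hopen : IsOpen {x : ℝ | 0 < x ∧ 0 < (ρ - 1) * x + v} := by
      have h1 : IsOpen {x : ℝ | 0 < x} := isOpen_lt continuous_const continuous_id
      have h2 : IsOpen {x : ℝ | 0 < (ρ - 1) * x + v} :=
        isOpen_lt continuous_const (by fun_prop)
      exact h1.inter h2
    have hev : (fun x => pdu Q x v) =ᶠ[nhds u]
        (fun x => k * a * x ^ (a - 1) * ((ρ - 1) * x + v) ^ b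
          + k * b * (ρ - 1) * x ^ a * ((ρ - 1) * x + v) ^ (b - 1)) := by
      filter_upwards [hopen.mem_nhds ⟨hu, hw⟩] with x hx
      exact hQu x v hx.1 hx.2
    have hd := (hdU ρ (k * a) (a - 1) b v u hu hw).add (hdU ρ (k * b * (ρ - 1)) a (b - 1) v u hu hw)
    calc pdu (pdu Q) u v = deriv (fun x => pdu Q x v) u := rfl
      _ = _ := hev.deriv_eq
      _ = _ := by
        erw [hd.deriv]; rw [show a - 1 - 1 = a - 2 by ring, show b - 1 - 1 = b - 2 by ring, ← hwdef]
  -- Q_uv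
  have huv : pdv (pdu Q) u v =
      k * a * b * u ^ (a - 1) * w ^ (b - 1)
        + k * b * (ρ - 1) * (b - 1) * u ^ a * w ^ (b - 2) := by
    have hopen : IsOpen {y : ℝ | 0 < (ρ - 1) * u + y} :=
      isOpen_lt continuous_const (by continuity)
    have hev : (fun y => pdu Q u y) =ᶠ[nhds v]
        (fun y => k * a * u ^ (a - 1) * ((ρ - 1) * u + y) ^ b
          + k * b * (ρ - 1) * u ^ a * ((ρ - 1) * u + y) ^ (b - 1)) := by
      filter_upwards [hopen.mem_nhds hw] with y hy
      exact hQu u y hu hy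
    have hd := (hdV ρ (k * a) (a - 1) b u v hw).add (hdV ρ (k * b * (ρ - 1)) a (b - 1) u v hw)
    calc pdv (pdu Q) u v = deriv (fun y => pdu Q u y) v := rfl
      _ = _ := hev.deriv_eq
      _ = _ := by
        erw [hd.deriv]; rw [show b - 1 - 1 = b - 2 by ring, ← hwdef]
  -- Q_vv
  have hvv : pdv (pdv Q) u v = k * b * (b - 1) * u ^ a * w ^ (b - 2) := by
    have hopen : IsOpen {y : ℝ | 0 < (ρ - 1) * u + y} :=
      isOpen_lt continuous_const (by continuity)
    have hev : (fun y => pdv Q u y) =ᶠ[nhds v]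
        (fun y => k * b * u ^ a * ((ρ - 1) * u + y) ^ (b - 1)) := by
      filter_upwards [hopen.mem_nhds hw] with y hy
      exact hQv u y hy
    have hd := hdV ρ (k * b) a (b - 1) u v hw
    calc pdv (pdv Q) u v = deriv (fun y => pdv Q u y) v := rfl
      _ = _ := hev.deriv_eq
      _ = _ := by
        rw [hd.deriv, show b - 1 - 1 = b - 2 by ring, ← hwdef]
  clear_value a b w Q
  clear hQu hQv
  -- rpow arithmetic
  have e1 : u ^ (a - 1) * u ^ (a - 1) = u ^ a * u ^ (a - 2) := by
    rw [← Real.rpow_add hu, ← Real.rpow_add hu]; ring_nf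
  have e2 : w ^ (b - 1) * w ^ (b - 1) = w ^ b * w ^ (b - 2) := by
    rw [← Real.rpow_add hw, ← Real.rpow_add hw]; ring_nf
  have hdet : hessDet Q u v =
      k ^ 2 * a * b * (1 - δ) * (u ^ a * u ^ (a - 2)) * (w ^ b * w ^ (b - 2)) := by
    rw [hessDet, huu, huv, hvv]
    have hδab : δ = a + b := hab.symm
    rw [hδab]
    linear_combination (-(k ^ 2 * a ^ 2 * b ^ 2) * (w ^ (b - 1) * w ^ (b - 1))) * e1 +
      (-(k ^ 2 * a ^ 2 * b ^ 2) * (u ^ a * u ^ (a - 2))) * e2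
  have hU : 0 < u ^ a * u ^ (a - 2) :=
    mul_pos (Real.rpow_pos_of_pos hu a) (Real.rpow_pos_of_pos hu (a - 2))
  have hW : 0 < w ^ b * w ^ (b - 2) :=
    mul_pos (Real.rpow_pos_of_pos hw b) (Real.rpow_pos_of_pos hw (b - 2))
  have hP : 0 < k ^ 2 * a * b * (u ^ a * u ^ (a - 2)) * (w ^ b * w ^ (b - 2)) :=
    mul_pos (mul_pos (mul_pos (mul_pos (pow_pos hk 2) ha0) hb0) hU) hW
  refine ⟨fun h => ?_, fun h => ?_, fun h => ?_⟩
  · rw [hdet, h]; ring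
  · rw [hdet]
    nlinarith [hP]
  · rw [hdet]
    nlinarith [hP]
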